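/- arXiv:2511.12358 — 3 statements merged into one kernel-verified Lean document; each statement's English description precedes it below -/
import Mathlib

section
/- Let u be an aperiodic sequence over a finite alphabet. Then for every n ∈ ℕ there exist a word f of length n and two distinct letters a, b such that both af and bf occur infinitely many times in u (in particular, f is a left special factor of u). -/
namespace ReflPaper

variable {A : Type*}

/-- The factor of `u` of length `n` at position `i`: `u(i) u(i+1) ⋯ u(i+n-1)`. -/
def factorAt (u : ℕ → A) (n i : ℕ) : List A :=
  (List.range n).map (fun k => u (i + k))

/-- The word `w` occurs in the sequence `u` at position `i`. -/
def OccursAt (u : ℕ → A) (w : List A) (i : ℕ) : Prop :=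
  w = factorAt u w.length i

/-- The language of `u`: the set of all factors of `u`. -/
def Lang (u : ℕ → A) : Set (List A) := {w | ∃ i, OccursAt u w i}

/-- The set of factors of `u` of length `n`. -/
def LangN (u : ℕ → A) (n : ℕ) : Set (List A) := {w | w.length = n ∧ w ∈ Lang u}

/-- The word `w` occurs infinitely many times in `u`. -/
def OccursInf (u : ℕ → A) (w : List A) : Prop := {i | OccursAt u w i}.Infinite

/-- `u` is eventually periodic. -/
def EventuallyPeriodic (u : ℕ → A) : Prop :=
  ∃ N p : ℕ, 1 ≤ p ∧ ∀ i, N ≤ i → u (i + p) = u i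

/-- Two words are reflectively equivalent if one equals the other or its reversal. -/
def ReflEquiv (w v : List A) : Prop := w = v ∨ w = v.reverse

/-- Reflective equivalence as a setoid on words. -/
def reflSetoid (A : Type*) : Setoid (List A) where
  r := ReflEquiv
  iseqv := by
    constructor
    · intro w; exact Or.inl rfl
    · intro w v h
      rcases h with h | h
      · exact Or.inl h.symm
      · subst h; simp [ReflEquiv]
    · intro w v x h1 h2
      rcases h1 with h1 | h1 <;> rcases h2 with h2 | h2 <;> subst h1 <;>
        simp [ReflEquiv, h2]

/-- The number of reflective-equivalence classes of words in a set `S`. -/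
noncomputable def nClasses (S : Set (List A)) : ℕ :=
  Set.ncard (Quotient.mk (reflSetoid A) '' S)

/-- The reflection complexity `r_u(n)`. -/
noncomputable def reflComplexity (u : ℕ → A) (n : ℕ) : ℕ := nClasses (LangN u n)

/-- The factor complexity `C_u(n) = #L_n(u)`. -/
noncomputable def factorComplexity (u : ℕ → A) (n : ℕ) : ℕ := (LangN u n).ncard

/-- The palindromic complexity `P_u(n)`. -/
noncomputable def palComplexity (u : ℕ → A) (n : ℕ) : ℕ :=
  Set.ncard {w ∈ LangN u n | w.reverse = w}

/-- Both-sided extensions of `w` in the language of `u`. -/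
def Bext (u : ℕ → A) (w : List A) : Set (List A) :=
  {x ∈ Lang u | ∃ a b : A, x = a :: (w ++ [b])}

/-- Right extensions of `w` in the language of `u`. -/
def Rext (u : ℕ → A) (w : List A) : Set (List A) :=
  {x ∈ Lang u | ∃ a : A, x = w ++ [a]}

/-- `T(w)`: the number of reflective-equivalence classes of `Bext(w) ∪ Bext(w̄)`. -/
noncomputable def TT (u : ℕ → A) (w : List A) : ℕ :=
  nClasses (Bext u w ∪ Bext u w.reverse)

/-- `w` is a right special factor of `u`. -/
def RightSpecial (u : ℕ → A) (w : List A) : Prop :=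
  ∃ a b : A, a ≠ b ∧ w ++ [a] ∈ Lang u ∧ w ++ [b] ∈ Lang u

/-- `w` is a left special factor of `u`. -/
def LeftSpecial (u : ℕ → A) (w : List A) : Prop :=
  ∃ a b : A, a ≠ b ∧ a :: w ∈ Lang u ∧ b :: w ∈ Lang u

/-- `u` is Sturmian: `C_u(n) = n + 1` for all `n`. -/
def Sturmian (u : ℕ → A) : Prop := ∀ n, factorComplexity u n = n + 1

/-- `u` is quasi-Sturmian: `C_u(n) = n + c` eventually. -/
def QuasiSturmian (u : ℕ → A) : Prop :=
  ∃ n₀ c : ℕ, ∀ n, n₀ ≤ n → factorComplexity u n = n + c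


lemma factorAt_length (u : ℕ → A) (n i : ℕ) : (factorAt u n i).length = n := by
  simp [factorAt]

lemma factorAt_succ_right (u : ℕ → A) (n i : ℕ) :
    factorAt u (n+1) i = factorAt u n i ++ [u (i+n)] := by
  simp [factorAt, List.range_succ]

lemma factorAt_succ_left (u : ℕ → A) (n i : ℕ) :
    factorAt u (n+1) i = u i :: factorAt u n (i+1) := by
  simp only [factorAt, List.range_succ_eq_map, List.map_cons, List.map_map]
  refine congrArg₂ List.cons (by simp) (List.map_congr_left fun a _ => ?_)
  simp only [Function.comp_apply]
  congr 1
  omega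

lemma factorAt_eq_iff {u : ℕ → A} {n i j : ℕ} :
    factorAt u n i = factorAt u n j ↔ ∀ k < n, u (i + k) = u (j + k) := by
  simp [factorAt, List.map_inj_left]

lemma occursAt_factorAt (u : ℕ → A) (n i : ℕ) : OccursAt u (factorAt u n i) i := by
  simp [OccursAt, factorAt_length]

lemma occursAt_append_singleton {u : ℕ → A} {f : List A} {b : A} {i : ℕ} :
    OccursAt u (f ++ [b]) i ↔ OccursAt u f i ∧ b = u (i + f.length) := by
  simp only [OccursAt, List.length_append, List.length_singleton, factorAt_succ_right]
  constructor
  · intro h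
    have := List.append_inj' h (by simp)
    obtain ⟨h1, h2⟩ := this
    exact ⟨h1, by simpa using h2⟩
  · rintro ⟨h1, h2⟩; rw [← h1, ← h2]


lemma occursAt_cons {u : ℕ → A} {f : List A} {a : A} {i : ℕ} :
    OccursAt u (a :: f) i ↔ a = u i ∧ OccursAt u f (i+1) := by
  simp only [OccursAt, List.length_cons, factorAt_succ_left, List.cons.injEq]

lemma finite_length_eq (A : Type*) [Finite A] (m : ℕ) :
    {l : List A | l.length = m}.Finite := by
  induction m with
  | zero =>
    apply Set.Finite.subset (Set.finite_singleton ([] : List A))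
    intro l hl
    simp only [Set.mem_setOf_eq, List.length_eq_zero_iff] at hl
    simp [hl]
  | succ m ih =>
    have : {l : List A | l.length = m + 1} ⊆
        (fun p : A × List A => p.1 :: p.2) '' (Set.univ ×ˢ {l | l.length = m}) := by
      rintro (_ | ⟨a, l⟩) hl
      · simp at hl
      · exact ⟨(a, l), ⟨trivial, by simpa using hl⟩, rfl⟩
    exact Set.Finite.subset ((Set.finite_univ.prod ih).image _) this

/-- Positions beyond which every factor occurs infinitely often. -/
lemma exists_bound (u : ℕ → A) [Finite A] (m : ℕ) :
    ∃ N : ℕ, ∀ i, N ≤ i → OccursInf u (factorAt u m i) := by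
  classical
  set B : Set (List A) := {w | w.length = m ∧ ¬ OccursInf u w} with hB
  have hBfin : B.Finite := (finite_length_eq A m).subset (fun w hw => hw.1)
  have hT : (⋃ w ∈ B, {i | OccursAt u w i}).Finite := by
    apply hBfin.biUnion
    intro w hw
    exact Set.not_infinite.mp hw.2
  obtain ⟨N, hN⟩ := hT.bddAbove
  refine ⟨N + 1, fun i hi => ?_⟩
  by_contra hcon
  have hmem : i ∈ ⋃ w ∈ B, {i | OccursAt u w i} := by
    refine Set.mem_biUnion ⟨factorAt_length u m i, hcon⟩ (occursAt_factorAt u m i)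
  have := hN hmem
  omega

lemma OccursInf.prefix {u : ℕ → A} {f : List A} {b : A}
    (h : OccursInf u (f ++ [b])) : OccursInf u f := by
  apply h.mono
  intro i hi
  exact (occursAt_append_singleton.mp hi).1

lemma OccursInf.tail {u : ℕ → A} {f : List A} {a : A}
    (h : OccursInf u (a :: f)) : OccursInf u f := by
  have himg : ((· + 1) '' {i | OccursAt u (a :: f) i}).Infinite :=
    h.image (Set.injOn_of_injective (add_left_injective 1))
  apply himg.mono
  rintro j ⟨i, hi, rfl⟩
  exact (occursAt_cons.mp hi).2

lemma exists_right_ext (u : ℕ → A) [Finite A] {f : List A}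
    (h : OccursInf u f) : ∃ b : A, OccursInf u (f ++ [b]) := by
  by_contra hcon
  push_neg at hcon
  simp only [OccursInf, Set.not_infinite] at hcon
  apply h
  have hsub : {i | OccursAt u f i} ⊆
      ⋃ b ∈ (Set.univ : Set A), {i | OccursAt u (f ++ [b]) i} := by
    intro i hi
    refine Set.mem_biUnion (Set.mem_univ (u (i + f.length))) ?_
    exact occursAt_append_singleton.mpr ⟨hi, rfl⟩
  exact Set.Finite.subset (Set.finite_univ.biUnion (fun b _ => hcon b)) hsub


theorem key (u : ℕ → A) [Finite A] (n : ℕ)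
    (H : ∀ (f : List A) (a b : A), f.length = n → a ≠ b →
      ¬ (OccursInf u (a :: f) ∧ OccursInf u (b :: f))) :
    EventuallyPeriodic u := by
  classical
  set S : Set (List A) := {w | w.length = n ∧ OccursInf u w} with hS
  set S' : Set (List A) := {w | w.length = n + 1 ∧ OccursInf u w} with hS'
  have hSfin : S.Finite := (finite_length_eq A n).subset (fun w hw => hw.1)
  have hS'fin : S'.Finite := (finite_length_eq A (n+1)).subset (fun w hw => hw.1)
  -- tail map is injective on S'
  have htail_inj : Set.InjOn List.tail S' := by
    rintro w1 hw1 w2 hw2 heq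
    obtain ⟨a, f, rfl⟩ : ∃ a f, w1 = a :: f := by
      cases w1 with
      | nil => exact absurd hw1.1 (by simp)
      | cons a f => exact ⟨a, f, rfl⟩
    obtain ⟨b, g, rfl⟩ : ∃ b g, w2 = b :: g := by
      cases w2 with
      | nil => exact absurd hw2.1 (by simp)
      | cons b g => exact ⟨b, g, rfl⟩
    simp only [List.tail_cons] at heq
    subst heq
    by_cases hab : a = b
    · rw [hab]
    · exact absurd ⟨hw1.2, hw2.2⟩ (H f a b (by simpa using hw1.1) hab)
  have htail_maps : ∀ w ∈ S', w.tail ∈ S := by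
    rintro (_ | ⟨a, f⟩) hw
    · exact absurd hw.1 (by simp)
    · exact ⟨by simpa using hw.1, hw.2.tail⟩
  have hcard1 : S'.ncard ≤ S.ncard :=
    Set.ncard_le_ncard_of_injOn List.tail htail_maps htail_inj hSfin
  -- dropLast is surjective from S' onto S
  have hsurj : S ⊆ List.dropLast '' S' := by
    rintro f ⟨hflen, hfinf⟩
    obtain ⟨b, hb⟩ := exists_right_ext u hfinf
    exact ⟨f ++ [b], ⟨by simp [hflen], hb⟩, by simp⟩
  have himg_sub : List.dropLast '' S' ⊆ S := by
    rintro _ ⟨w, hw, rfl⟩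
    obtain ⟨f, b, rfl⟩ : ∃ f b, w = f ++ [b] := by
      rcases List.eq_nil_or_concat w with rfl | ⟨f, b, rfl⟩
      · exact absurd hw.1 (by simp)
      · exact ⟨f, b, by simp⟩
    refine ⟨?_, ?_⟩
    · have := hw.1; simpa using this
    · simpa using hw.2.prefix
  have himg_eq : List.dropLast '' S' = S := Set.Subset.antisymm himg_sub hsurj
  have hdrop_inj : Set.InjOn List.dropLast S' := by
    apply Set.injOn_of_ncard_image_eq _ hS'fin
    rw [himg_eq]
    have hcard2 : S.ncard ≤ S'.ncard := by
      rw [← himg_eq]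
      exact Set.ncard_image_le hS'fin
    omega
  -- uniqueness of infinite right extension
  have huniq : ∀ (f : List A) (b c : A), f.length = n →
      OccursInf u (f ++ [b]) → OccursInf u (f ++ [c]) → b = c := by
    intro f b c hflen hb hc
    have h1 : (f ++ [b]) ∈ S' := ⟨by simp [hflen], hb⟩
    have h2 : (f ++ [c]) ∈ S' := ⟨by simp [hflen], hc⟩
    have := hdrop_inj h1 h2 (by simp)
    simpa using this
  -- choice of the right extension
  have hne : Nonempty A := ⟨u 0⟩
  let bf : List A → A := fun f =>
    if h : ∃ b : A, OccursInf u (f ++ [b]) then h.choose else u 0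
  have hbf : ∀ (f : List A) (b : A), f.length = n → OccursInf u (f ++ [b]) →
      bf f = b := by
    intro f b hflen hb
    have hex : ∃ b : A, OccursInf u (f ++ [b]) := ⟨b, hb⟩
    have : bf f = hex.choose := by simp [bf, hex]
    rw [this]
    exact huniq f _ b hflen hex.choose_spec hb
  obtain ⟨N, hN⟩ := exists_bound u (n + 1)
  have hstep : ∀ i, N ≤ i → u (i + n) = bf (factorAt u n i) := by
    intro i hi
    have h1 : OccursInf u (factorAt u n i ++ [u (i + n)]) := by
      rw [← factorAt_succ_right]; exact hN i hi
    exact (hbf _ _ (factorAt_length u n i) h1).symm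
  -- pigeonhole
  obtain ⟨i, hi, j, hj, hij, hfeq⟩ :=
    (Set.Ici_infinite N).exists_ne_map_eq_of_mapsTo
      (f := fun m => factorAt u n m) (t := {l : List A | l.length = n})
      (fun m _ => factorAt_length u n m)
      (finite_length_eq A n)
  wlog hlt : i < j generalizing i j
  · exact this j hj i hi (Ne.symm hij) hfeq.symm (by omega)
  set p := j - i with hp
  have hp1 : 1 ≤ p := by omega
  refine ⟨i, p, hp1, ?_⟩
  intro m hm
  induction m using Nat.strong_induction_on with
  | _ m IH =>
  by_cases hcase : m < i + n
  · have hk := factorAt_eq_iff.mp hfeq (m - i) (by omega)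
    have e1 : i + (m - i) = m := by omega
    have e2 : j + (m - i) = m + p := by omega
    rw [e1, e2] at hk
    exact hk.symm
  · have h1 : u m = bf (factorAt u n (m - n)) := by
      have := hstep (m - n) (by simp at hi; omega)
      rw [show m - n + n = m by omega] at this
      exact this
    have h2 : u (m + p) = bf (factorAt u n (m - n + p)) := by
      have := hstep (m - n + p) (by simp at hi; omega)
      rw [show m - n + p + n = m + p by omega] at this
      exact this
    have hfac : factorAt u n (m - n + p) = factorAt u n (m - n) := by
      rw [factorAt_eq_iff]
      intro k hk
      have := IH (m - n + k) (by omega) (by omega)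
      rw [show m - n + p + k = m - n + k + p by omega, this]
    rw [h1, h2, hfac]

/-- for aperiodic `u` and every `n`, there are a word `f` of length `n`
and distinct letters `a, b` such that `af` and `bf` occur infinitely many times in `u`. -/
theorem stmt16 {A : Type*} [Fintype A] (u : ℕ → A) (hu : ¬ EventuallyPeriodic u) :
    ∀ n : ℕ, ∃ (f : List A) (a b : A), f.length = n ∧ a ≠ b ∧
      OccursInf u (a :: f) ∧ OccursInf u (b :: f) := by
  intro n
  by_contra hcon
  refine hu (key u n ?_)
  intro f a b hflen hab hand
  exact hcon ⟨f, a, b, hflen, hab, hand.1, hand.2⟩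

end ReflPaper
end

section
/- Let u be an aperiodic sequence over a finite alphabet in which at least three distinct letters occur, and suppose r_u(2) = 2. Then there exist pairwise distinct letters a, b, c and an aperiodic sequence v over {a, b} such that u = π(v) or u = c·π(v); in particular, the set of factors of u of length 2 is exactly {ac, bc, ca, cb}. -/
namespace ReflPaper

variable {A : Type*}

/-! ### Auxiliary lemmas for Statement 18 -/

lemma factorAt_two (u : ℕ → A) (i : ℕ) : factorAt u 2 i = [u i, u (i + 1)] := by
  simp [factorAt, List.range_succ]

lemma mem_langN_two_iff (u : ℕ → A) (w : List A) :
    w ∈ LangN u 2 ↔ ∃ i, w = [u i, u (i + 1)] := by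
  constructor
  · rintro ⟨hlen, i, hocc⟩
    simp only [OccursAt] at hocc
    rw [hlen, factorAt_two] at hocc
    exact ⟨i, hocc⟩
  · rintro ⟨i, rfl⟩
    exact ⟨rfl, i, by simp [OccursAt, factorAt_two]⟩

lemma reflEquiv_pair {p q x y : A} (h : ReflEquiv [p, q] [x, y]) :
    (p = x ∧ q = y) ∨ (p = y ∧ q = x) := by
  rcases h with h | h
  · left; simpa using h
  · right; simpa using h

/-- If `u` reaches `x` and cycles `x → y → x → ⋯`, it is eventually periodic. -/
lemma epi_of_cycle2 (u : ℕ → A) (x y : A) (i0 : ℕ) (h0 : u i0 = x)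
    (hx : ∀ i, u i = x → u (i + 1) = y) (hy : ∀ i, u i = y → u (i + 1) = x) :
    EventuallyPeriodic u := by
  have key : ∀ k, u (i0 + 2 * k) = x ∧ u (i0 + 2 * k + 1) = y := by
    intro k
    induction k with
    | zero =>
      refine ⟨by simpa using h0, ?_⟩
      have := hx i0 h0
      simpa using this
    | succ k ih =>
      have h1 : u (i0 + 2 * k + 1 + 1) = x := hy _ ih.2
      have e : i0 + 2 * k + 1 + 1 = i0 + 2 * (k + 1) := by ring
      rw [e] at h1
      exact ⟨h1, hx _ h1⟩
  refine ⟨i0, 2, one_le_two, ?_⟩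
  intro i hi
  obtain ⟨m, rfl⟩ := Nat.exists_eq_add_of_le hi
  rcases Nat.even_or_odd m with ⟨k, hk⟩ | ⟨k, hk⟩
  · subst hk
    have e1 : i0 + (k + k) + 2 = i0 + 2 * (k + 1) := by ring
    have e2 : i0 + (k + k) = i0 + 2 * k := by ring
    rw [e1, e2, (key (k + 1)).1, (key k).1]
  · subst hk
    have e1 : i0 + (2 * k + 1) + 2 = i0 + 2 * (k + 1) + 1 := by ring
    have e2 : i0 + (2 * k + 1) = i0 + 2 * k + 1 := by ring
    rw [e1, e2, (key (k + 1)).2, (key k).2]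

lemma pigeon (u : ℕ → A) (p q : A)
    (h3 : ∃ i j k : ℕ, u i ≠ u j ∧ u j ≠ u k ∧ u i ≠ u k)
    (hconf : ∀ m, u m = p ∨ u m = q) : False := by
  obtain ⟨i, j, k, hij, hjk, hik⟩ := h3
  rcases hconf i with hi | hi <;> rcases hconf j with hj | hj <;>
    rcases hconf k with hk | hk <;>
    first
      | exact hij (hi.trans hj.symm)
      | exact hjk (hj.trans hk.symm)
      | exact hik (hi.trans hk.symm)

/-- No reflection class of `L₂(u)` can be a palindromic singleton `{xx}`. -/
lemma nopal (u : ℕ → A) (hu : ¬ EventuallyPeriodic u)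
    (h3 : ∃ i j k : ℕ, u i ≠ u j ∧ u j ≠ u k ∧ u i ≠ u k)
    (x z w : A) (ho : ∃ i, u i = x)
    (hne1 : ¬(x = z ∧ x = w))
    (K : ∀ i, (u i = x ∧ u (i + 1) = x) ∨ (u i = z ∧ u (i + 1) = w) ∨
              (u i = w ∧ u (i + 1) = z)) :
    False := by
  by_cases hz : z = x <;> by_cases hw : w = x
  · exact hne1 ⟨hz.symm, hw.symm⟩
  · refine pigeon u x w h3 fun m => ?_
    rcases K m with ⟨h, _⟩ | ⟨h, _⟩ | ⟨h, _⟩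
    exacts [Or.inl h, Or.inl (h.trans hz), Or.inr h]
  · refine pigeon u x z h3 fun m => ?_
    rcases K m with ⟨h, _⟩ | ⟨h, _⟩ | ⟨h, _⟩
    exacts [Or.inl h, Or.inr h, Or.inl (h.trans hw)]
  · obtain ⟨i0, h0⟩ := ho
    refine hu (epi_of_cycle2 u x x i0 h0 ?_ ?_) <;>
    · intro i hi
      rcases K i with ⟨_, h2⟩ | ⟨h1, _⟩ | ⟨h1, _⟩
      exacts [h2, absurd (hi.symm.trans h1).symm hz, absurd (hi.symm.trans h1).symm hw]

/-- The main structural lemma, once the letters `a, b, c` have been identified. -/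
lemma main_aux (u : ℕ → A) (hu : ¬ EventuallyPeriodic u) (a b c : A)
    (hab : a ≠ b) (hca : c ≠ a) (hcb : c ≠ b)
    (ha : ∃ i, u i = a) (hb : ∃ i, u i = b)
    (K : ∀ i, (u i = a ∧ u (i + 1) = c) ∨ (u i = c ∧ u (i + 1) = a) ∨
              (u i = b ∧ u (i + 1) = c) ∨ (u i = c ∧ u (i + 1) = b)) :
    ∃ (a' b' c' : A) (v : ℕ → A), a' ≠ b' ∧ c' ≠ a' ∧ c' ≠ b' ∧
      (∀ i, v i = a' ∨ v i = b') ∧ ¬ EventuallyPeriodic v ∧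
      ((∀ i, u (2 * i) = v i ∧ u (2 * i + 1) = c') ∨
       (u 0 = c' ∧ ∀ i, u (2 * i + 1) = v i ∧ u (2 * i + 2) = c')) ∧
      LangN u 2 = {[a', c'], [b', c'], [c', a'], [c', b']} := by
  have hne_step : ∀ i, u i ≠ c → u (i + 1) = c := by
    intro i h
    rcases K i with ⟨_, h2⟩ | ⟨h1, _⟩ | ⟨_, h2⟩ | ⟨h1, _⟩
    exacts [h2, absurd h1 h, h2, absurd h1 h]
  have hc_step : ∀ i, u i = c → u (i + 1) = a ∨ u (i + 1) = b := by
    intro i h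
    rcases K i with ⟨h1, _⟩ | ⟨_, h2⟩ | ⟨h1, _⟩ | ⟨_, h2⟩
    exacts [absurd (h.symm.trans h1) hca, Or.inl h2,
      absurd (h.symm.trans h1) hcb, Or.inr h2]
  have hc_step' : ∀ i, u i = c → u (i + 1) ≠ c := by
    intro i h hx
    rcases hc_step i h with h' | h'
    exacts [hca (hx.symm.trans h'), hcb (hx.symm.trans h')]
  -- L₂(u) = {ac, bc, ca, cb}
  have hL : LangN u 2 = ({[a, c], [b, c], [c, a], [c, b]} : Set (List A)) := by
    ext w
    rw [mem_langN_two_iff]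
    simp only [Set.mem_insert_iff, Set.mem_singleton_iff]
    constructor
    · rintro ⟨i, rfl⟩
      rcases K i with ⟨h1, h2⟩ | ⟨h1, h2⟩ | ⟨h1, h2⟩ | ⟨h1, h2⟩ <;> rw [h1, h2] <;> tauto
    · have hmain : ∀ d : A, d = a ∨ d = b → c ≠ d → (∃ i, u i = d) →
          (∃ i, [d, c] = [u i, u (i + 1)]) ∧ ∃ i, [c, d] = [u i, u (i + 1)] := by
        intro d hd hcd ⟨i0, hi0⟩
        have hdc : u (i0 + 1) = c := hne_step i0 (by rw [hi0]; exact hcd.symm)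
        refine ⟨⟨i0, by rw [hi0, hdc]⟩, ?_⟩
        by_contra hno
        push_neg at hno
        -- after every c comes the other letter e
        obtain ⟨e, he, hde⟩ : ∃ e, (e = a ∨ e = b) ∧ d ≠ e := by
          rcases hd with rfl | rfl
          exacts [⟨b, Or.inr rfl, hab⟩, ⟨a, Or.inl rfl, hab.symm⟩]
        have hce : ∀ j, u j = c → u (j + 1) = e := by
          intro j hj
          have hne' : u (j + 1) ≠ d := by
            intro hx
            exact hno j (by rw [hj, hx])
          rcases hc_step j hj with h' | h' <;> rcases hd with rfl | rfl <;>
            rcases he with rfl | rfl <;>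
            first
              | exact h'
              | exact absurd h' hne'
              | exact absurd rfl hde
        have hec : ∀ j, u j = e → u (j + 1) = c := by
          intro j hj
          refine hne_step j ?_
          rw [hj]
          rcases he with rfl | rfl
          exacts [hca.symm, hcb.symm]
        exact hu (epi_of_cycle2 u c e (i0 + 1) hdc hce hec)
      intro h
      obtain ⟨hac, hca'⟩ := hmain a (Or.inl rfl) hca ha
      obtain ⟨hbc, hcb'⟩ := hmain b (Or.inr rfl) hcb hb
      rcases h with rfl | rfl | rfl | rfl
      exacts [hac, hbc, hca', hcb']
  by_cases h0 : u 0 = c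
  · -- c at even positions
    have claim : ∀ i, u (2 * i) = c ∧ u (2 * i + 1) ≠ c := by
      intro i
      induction i with
      | zero => exact ⟨by simpa using h0, by simpa using hc_step' 0 h0⟩
      | succ i ih =>
        have e : 2 * (i + 1) = 2 * i + 1 + 1 := by ring
        have h1 : u (2 * (i + 1)) = c := by rw [e]; exact hne_step _ ih.2
        exact ⟨h1, hc_step' _ h1⟩
    refine ⟨a, b, c, fun i => u (2 * i + 1), hab, hca, hcb, ?_, ?_, ?_, hL⟩
    · exact fun i => hc_step _ (claim i).1
    · rintro ⟨N, p, hp, hper⟩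
      refine hu ⟨2 * N + 2, 2 * p, by omega, ?_⟩
      intro i hi
      rcases Nat.even_or_odd i with ⟨k, hk⟩ | ⟨k, hk⟩
      · subst hk
        have e1 : k + k + 2 * p = 2 * (k + p) := by ring
        have e2 : k + k = 2 * k := by ring
        rw [e1, e2, (claim (k + p)).1, (claim k).1]
      · subst hk
        have e1 : 2 * k + 1 + 2 * p = 2 * (k + p) + 1 := by ring
        rw [e1]
        exact hper k (by omega)
    · refine Or.inr ⟨h0, fun i => ⟨rfl, ?_⟩⟩
      have e : 2 * i + 2 = 2 * (i + 1) := by ring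
      rw [e]
      exact (claim (i + 1)).1
  · -- c at odd positions
    have claim : ∀ i, u (2 * i) ≠ c ∧ u (2 * i + 1) = c := by
      intro i
      induction i with
      | zero => exact ⟨by simpa using h0, by simpa using hne_step 0 h0⟩
      | succ i ih =>
        have e : 2 * (i + 1) = 2 * i + 1 + 1 := by ring
        have h1 : u (2 * (i + 1)) ≠ c := by rw [e]; exact hc_step' _ ih.2
        exact ⟨h1, hne_step _ h1⟩
    refine ⟨a, b, c, fun i => u (2 * i), hab, hca, hcb, ?_, ?_, ?_, hL⟩
    · intro i
      rcases K (2 * i) with ⟨h, _⟩ | ⟨h, _⟩ | ⟨h, _⟩ | ⟨h, _⟩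
      exacts [Or.inl h, absurd h (claim i).1, Or.inr h, absurd h (claim i).1]
    · rintro ⟨N, p, hp, hper⟩
      refine hu ⟨2 * N + 2, 2 * p, by omega, ?_⟩
      intro i hi
      rcases Nat.even_or_odd i with ⟨k, hk⟩ | ⟨k, hk⟩
      · subst hk
        have e1 : k + k + 2 * p = 2 * (k + p) := by ring
        have e2 : k + k = 2 * k := by ring
        rw [e1, e2]
        exact hper k (by omega)
      · subst hk
        have e1 : 2 * k + 1 + 2 * p = 2 * (k + p) + 1 := by ring
        rw [e1, (claim (k + p)).2, (claim k).2]
    · exact Or.inl fun i => ⟨rfl, (claim i).2⟩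

/-- Classification given the two reflection classes of `L₂(u)`. -/
lemma classify (u : ℕ → A) (hu : ¬ EventuallyPeriodic u)
    (h3 : ∃ i j k : ℕ, u i ≠ u j ∧ u j ≠ u k ∧ u i ≠ u k)
    (x1 y1 x2 y2 : A)
    (ho1 : ∃ i, u i = x1 ∧ u (i + 1) = y1) (ho2 : ∃ i, u i = x2 ∧ u (i + 1) = y2)
    (hne1 : ¬(x1 = x2 ∧ y1 = y2)) (hne2 : ¬(x1 = y2 ∧ y1 = x2))
    (K : ∀ i, (u i = x1 ∧ u (i + 1) = y1) ∨ (u i = y1 ∧ u (i + 1) = x1) ∨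
              (u i = x2 ∧ u (i + 1) = y2) ∨ (u i = y2 ∧ u (i + 1) = x2)) :
    ∃ (a b c : A) (v : ℕ → A), a ≠ b ∧ c ≠ a ∧ c ≠ b ∧
      (∀ i, v i = a ∨ v i = b) ∧ ¬ EventuallyPeriodic v ∧
      ((∀ i, u (2 * i) = v i ∧ u (2 * i + 1) = c) ∨
       (u 0 = c ∧ ∀ i, u (2 * i + 1) = v i ∧ u (2 * i + 2) = c)) ∧
      LangN u 2 = {[a, c], [b, c], [c, a], [c, b]} := by
  obtain ⟨i1, h1a, h1b⟩ := ho1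
  obtain ⟨i2, h2a, h2b⟩ := ho2
  -- neither class is palindromic
  have hx1y1 : x1 ≠ y1 := by
    intro h
    subst h
    refine nopal u hu h3 x1 x2 y2 ⟨i1, h1a⟩ (fun ⟨e1, e2⟩ => hne1 ⟨e1, e2⟩) ?_
    intro i
    rcases K i with h | h | h | h
    exacts [Or.inl h, Or.inl h, Or.inr (Or.inl h), Or.inr (Or.inr h)]
  have hx2y2 : x2 ≠ y2 := by
    intro h
    subst h
    refine nopal u hu h3 x2 x1 y1 ⟨i2, h2a⟩
      (fun ⟨e1, e2⟩ => hne1 ⟨e1.symm, e2.symm⟩) ?_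
    intro i
    rcases K i with h | h | h | h
    exacts [Or.inr (Or.inl h), Or.inr (Or.inr h), Or.inl h, Or.inl h]
  -- the two classes share a letter
  have hshare : x1 = x2 ∨ x1 = y2 ∨ y1 = x2 ∨ y1 = y2 := by
    by_contra h
    push_neg at h
    obtain ⟨e12, e1y, ey2, eyy⟩ := h
    refine hu (epi_of_cycle2 u x1 y1 i1 h1a ?_ ?_)
    · intro i hi
      rcases K i with ⟨_, h2⟩ | ⟨h1, _⟩ | ⟨h1, _⟩ | ⟨h1, _⟩
      exacts [h2, absurd (hi.symm.trans h1) hx1y1, absurd (hi.symm.trans h1) e12,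
        absurd (hi.symm.trans h1) e1y]
    · intro i hi
      rcases K i with ⟨h1, _⟩ | ⟨_, h2⟩ | ⟨h1, _⟩ | ⟨h1, _⟩
      exacts [absurd (hi.symm.trans h1).symm hx1y1, h2,
        absurd (hi.symm.trans h1) ey2, absurd (hi.symm.trans h1) eyy]
  rcases hshare with h | h | h | h
  · -- c = x1 = x2, a = y1, b = y2
    subst h
    refine main_aux u hu y1 y2 x1 (fun e => hne1 ⟨rfl, e⟩) hx1y1 hx2y2
      ⟨i1 + 1, h1b⟩ ⟨i2 + 1, h2b⟩ fun i => ?_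
    rcases K i with h | h | h | h <;> tauto
  · -- c = x1 = y2, a = y1, b = x2
    subst h
    refine main_aux u hu y1 x2 x1 (fun e => hne2 ⟨rfl, e⟩) hx1y1 (Ne.symm hx2y2)
      ⟨i1 + 1, h1b⟩ ⟨i2, h2a⟩ fun i => ?_
    rcases K i with h | h | h | h <;> tauto
  · -- c = y1 = x2, a = x1, b = y2
    subst h
    refine main_aux u hu x1 y2 y1 (fun e => hne2 ⟨e, rfl⟩) (Ne.symm hx1y1) hx2y2
      ⟨i1, h1a⟩ ⟨i2 + 1, h2b⟩ fun i => ?_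
    rcases K i with h | h | h | h <;> tauto
  · -- c = y1 = y2, a = x1, b = x2
    subst h
    refine main_aux u hu x1 x2 y1 (fun e => hne1 ⟨e, rfl⟩) (Ne.symm hx1y1)
      (Ne.symm hx2y2) ⟨i1, h1a⟩ ⟨i2, h2a⟩ fun i => ?_
    rcases K i with h | h | h | h <;> tauto

/-- an aperiodic `u` with at least three distinct letters occurring and
`r_u(2) = 2` is `π(v)` or `c·π(v)` for an aperiodic binary `v`; in particular
`L_2(u) = {ac, bc, ca, cb}`. -/
theorem stmt18 {A : Type*} [Fintype A] (u : ℕ → A) (hu : ¬ EventuallyPeriodic u)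
    (h3 : ∃ i j k : ℕ, u i ≠ u j ∧ u j ≠ u k ∧ u i ≠ u k)
    (hr : reflComplexity u 2 = 2) :
    ∃ (a b c : A) (v : ℕ → A), a ≠ b ∧ c ≠ a ∧ c ≠ b ∧
      (∀ i, v i = a ∨ v i = b) ∧ ¬ EventuallyPeriodic v ∧
      ((∀ i, u (2 * i) = v i ∧ u (2 * i + 1) = c) ∨
       (u 0 = c ∧ ∀ i, u (2 * i + 1) = v i ∧ u (2 * i + 2) = c)) ∧
      LangN u 2 = {[a, c], [b, c], [c, a], [c, b]} := by
  classical
  have hr' : (Quotient.mk (reflSetoid A) '' LangN u 2).ncard = 2 := hr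
  obtain ⟨q1, q2, hq12, hQ⟩ := Set.ncard_eq_two.mp hr'
  have hq1 : q1 ∈ Quotient.mk (reflSetoid A) '' LangN u 2 := by
    rw [hQ]; exact Or.inl rfl
  have hq2 : q2 ∈ Quotient.mk (reflSetoid A) '' LangN u 2 := by
    rw [hQ]; exact Or.inr rfl
  obtain ⟨w1, hw1, hw1q⟩ := hq1
  obtain ⟨w2, hw2, hw2q⟩ := hq2
  have hcover : ∀ w ∈ LangN u 2, ReflEquiv w w1 ∨ ReflEquiv w w2 := by
    intro w hw
    have hmem : Quotient.mk (reflSetoid A) w ∈ ({q1, q2} : Set _) := by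
      rw [← hQ]; exact ⟨w, hw, rfl⟩
    rcases hmem with h | h
    · exact Or.inl (Quotient.exact (h.trans hw1q.symm))
    · exact Or.inr (Quotient.exact (h.trans hw2q.symm))
  have hne : ¬ ReflEquiv w1 w2 := by
    intro h
    exact hq12 (hw1q ▸ hw2q ▸ Quotient.sound h)
  obtain ⟨i1, hw1e⟩ := (mem_langN_two_iff u w1).mp hw1
  obtain ⟨i2, hw2e⟩ := (mem_langN_two_iff u w2).mp hw2
  subst hw1e; subst hw2e
  have hne1 : ¬(u i1 = u i2 ∧ u (i1 + 1) = u (i2 + 1)) := by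
    rintro ⟨e1, e2⟩
    exact hne (Or.inl (by rw [e1, e2]))
  have hne2 : ¬(u i1 = u (i2 + 1) ∧ u (i1 + 1) = u i2) := by
    rintro ⟨e1, e2⟩
    exact hne (Or.inr (by rw [e1, e2]; simp))
  have K : ∀ i, (u i = u i1 ∧ u (i + 1) = u (i1 + 1)) ∨
      (u i = u (i1 + 1) ∧ u (i + 1) = u i1) ∨
      (u i = u i2 ∧ u (i + 1) = u (i2 + 1)) ∨
      (u i = u (i2 + 1) ∧ u (i + 1) = u i2) := by
    intro i
    have hmem : [u i, u (i + 1)] ∈ LangN u 2 := (mem_langN_two_iff u _).mpr ⟨i, rfl⟩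
    rcases hcover _ hmem with h | h
    · rcases reflEquiv_pair h with h' | h'
      exacts [Or.inl h', Or.inr (Or.inl h')]
    · rcases reflEquiv_pair h with h' | h'
      exacts [Or.inr (Or.inr (Or.inl h')), Or.inr (Or.inr (Or.inr h'))]
  exact classify u hu h3 (u i1) (u (i1 + 1)) (u i2) (u (i2 + 1))
    ⟨i1, rfl, rfl⟩ ⟨i2, rfl, rfl⟩ hne1 hne2 K

end ReflPaper
end

section
/- Let u be an aperiodic sequence over a finite alphabet with r_u(2) = 2. Then either there exist two distinct letters a, b such that the set of factors of u of length 2 is exactly {aa, ab, ba}, or there exist pairwise distinct letters a, b, c such that the set of factors of u of length 2 is exactly {ac, bc, ca, cb}. -/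
namespace ReflPaper

variable {A : Type*}

section Aux19

lemma factor2_mem (u : ℕ → A) (i : ℕ) : [u i, u (i+1)] ∈ LangN u 2 := by
  refine ⟨rfl, i, ?_⟩
  simp [OccursAt, factorAt, List.range_succ]

lemma mem_of_eq {u : ℕ → A} {x y : A} {i : ℕ} (hx : u i = x) (hy : u (i+1) = y) :
    [x, y] ∈ LangN u 2 := by
  subst hx; subst hy; exact factor2_mem u i

lemma per1 (u : ℕ → A) (N : ℕ) (h : ∀ i, N ≤ i → u (i+1) = u i) : EventuallyPeriodic u :=
  ⟨N, 1, le_refl 1, h⟩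

lemma per2 (u : ℕ → A) (N : ℕ) (s t : A)
    (h : ∀ i, N ≤ i → (u i = s ∧ u (i+1) = t) ∨ (u i = t ∧ u (i+1) = s)) :
    EventuallyPeriodic u := by
  refine ⟨N, 2, by norm_num, fun i hi => ?_⟩
  have h1 := h i hi
  have h2 := h (i+1) (le_trans hi (Nat.le_succ i))
  have e : i + 2 = (i+1)+1 := rfl
  rw [e]
  rcases h1 with ⟨e1,e2⟩|⟨e1,e2⟩ <;> rcases h2 with ⟨f1,f2⟩|⟨f1,f2⟩ <;> simp_all

lemma palcase (u : ℕ → A) (hu : ¬ EventuallyPeriodic u) (a d : A)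
    (hD : ∀ w ∈ LangN u 2, w = [a,a] ∨ w = [a,d] ∨ w = [d,a]) :
    LangN u 2 = {[a,a],[a,d],[d,a]} := by
  have key : ∀ i, (u i = a ∧ u (i+1) = a) ∨ (u i = a ∧ u (i+1) = d) ∨
      (u i = d ∧ u (i+1) = a) := by
    intro i
    simpa using hD _ (factor2_mem u i)
  have mem_ad : [a,d] ∈ LangN u 2 := by
    by_contra h
    have h' : ∀ i, u (i+1) = a := by
      intro i
      rcases key i with ⟨_,h2⟩|⟨h1,h2⟩|⟨_,h2⟩
      · exact h2
      · exact absurd (mem_of_eq h1 h2) h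
      · exact h2
    refine hu (per1 u 1 fun i hi => ?_)
    obtain ⟨j, rfl⟩ : ∃ j, i = j + 1 := ⟨i - 1, by omega⟩
    rw [h' j, h' (j+1)]
  have mem_da : [d,a] ∈ LangN u 2 := by
    by_contra h
    have h1 : ∀ j, u j = a := by
      intro j
      rcases key j with ⟨h1,_⟩|⟨h1,_⟩|⟨h1,h2⟩
      · exact h1
      · exact h1
      · exact absurd (mem_of_eq h1 h2) h
    refine hu (per1 u 0 fun i _ => ?_)
    rw [h1 i, h1 (i+1)]
  have mem_aa : [a,a] ∈ LangN u 2 := by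
    by_contra h
    refine hu (per2 u 0 a d fun i _ => ?_)
    rcases key i with ⟨h1,h2⟩|hh|hh
    · exact absurd (mem_of_eq h1 h2) h
    · exact Or.inl hh
    · exact Or.inr hh
  ext w
  constructor
  · intro hw
    rcases hD w hw with h|h|h <;> simp [h]
  · intro hw
    simp only [Set.mem_insert_iff, Set.mem_singleton_iff] at hw
    rcases hw with rfl|rfl|rfl
    exacts [mem_aa, mem_ad, mem_da]

lemma shared_aux (u : ℕ → A) (hu : ¬ EventuallyPeriodic u) (m x y : A)
    (hxm : x ≠ m) (hxy : x ≠ y)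
    (key : ∀ i, (u i = x ∧ u (i+1) = m) ∨ (u i = m ∧ u (i+1) = x) ∨
      (u i = y ∧ u (i+1) = m) ∨ (u i = m ∧ u (i+1) = y)) :
    [x,m] ∈ LangN u 2 ∧ [m,x] ∈ LangN u 2 := by
  constructor
  · by_contra h
    have hnx : ∀ i, u i ≠ x := by
      intro i hx
      rcases key i with ⟨h1,h2⟩|⟨h1,_⟩|⟨h1,_⟩|⟨h1,_⟩
      · exact h (mem_of_eq h1 h2)
      · exact hxm (hx.symm.trans h1)
      · exact hxy (hx.symm.trans h1)
      · exact hxm (hx.symm.trans h1)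
    refine hu (per2 u 0 y m fun i _ => ?_)
    rcases key i with ⟨h1,_⟩|⟨_,h2⟩|hh|hh
    · exact absurd h1 (hnx i)
    · exact absurd h2 (hnx (i+1))
    · exact Or.inl hh
    · exact Or.inr hh
  · by_contra h
    have hnx : ∀ i, u (i+1) ≠ x := by
      intro i hx
      rcases key i with ⟨_,h2⟩|⟨h1,h2⟩|⟨_,h2⟩|⟨_,h2⟩
      · exact hxm (hx.symm.trans h2)
      · exact h (mem_of_eq h1 h2)
      · exact hxm (hx.symm.trans h2)
      · exact hxy (hx.symm.trans h2)
    refine hu (per2 u 1 y m fun i hi => ?_)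
    obtain ⟨j, rfl⟩ : ∃ j, i = j + 1 := ⟨i - 1, by omega⟩
    rcases key (j+1) with ⟨h1,_⟩|⟨_,h2⟩|hh|hh
    · exact absurd h1 (hnx j)
    · exact absurd h2 (hnx (j+1))
    · exact Or.inl hh
    · exact Or.inr hh

lemma shared (u : ℕ → A) (hu : ¬ EventuallyPeriodic u) (m x y : A)
    (hxm : x ≠ m) (hym : y ≠ m) (hxy : x ≠ y)
    (hD : ∀ w ∈ LangN u 2, w = [x,m] ∨ w = [m,x] ∨ w = [y,m] ∨ w = [m,y]) :
    LangN u 2 = {[x,m],[y,m],[m,x],[m,y]} := by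
  have key : ∀ i, (u i = x ∧ u (i+1) = m) ∨ (u i = m ∧ u (i+1) = x) ∨
      (u i = y ∧ u (i+1) = m) ∨ (u i = m ∧ u (i+1) = y) := by
    intro i
    simpa using hD _ (factor2_mem u i)
  have hx := shared_aux u hu m x y hxm hxy key
  have hy := shared_aux u hu m y x hym (Ne.symm hxy) (fun i => by have := key i; tauto)
  ext w
  constructor
  · intro hw
    rcases hD w hw with h|h|h|h <;> simp [h]
  · intro hw
    simp only [Set.mem_insert_iff, Set.mem_singleton_iff] at hw
    rcases hw with rfl|rfl|rfl|rfl
    exacts [hx.1, hy.1, hx.2, hy.2]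

lemma contra_pal2 (u : ℕ → A) (a c : A)
    (key : ∀ i, (u i = a ∧ u (i+1) = a) ∨ (u i = c ∧ u (i+1) = c)) :
    EventuallyPeriodic u := by
  refine per1 u 0 fun i _ => ?_
  rcases key i with ⟨h1,h2⟩|⟨h1,h2⟩ <;> rw [h1,h2]

lemma contra_paldisj (u : ℕ → A) (a c d : A) (hac : a ≠ c) (had : a ≠ d)
    (key : ∀ i, (u i = a ∧ u (i+1) = a) ∨ (u i = c ∧ u (i+1) = d) ∨
      (u i = d ∧ u (i+1) = c)) :
    EventuallyPeriodic u := by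
  by_cases h0 : u 0 = a
  · have ha : ∀ i, u i = a := by
      intro i
      induction i with
      | zero => exact h0
      | succ j ih =>
        rcases key j with ⟨_,h2⟩|⟨h1,_⟩|⟨h1,_⟩
        · exact h2
        · exact absurd (ih.symm.trans h1) hac
        · exact absurd (ih.symm.trans h1) had
    refine per1 u 0 fun i _ => by rw [ha i, ha (i+1)]
  · have hna : ∀ i, u i ≠ a := by
      intro i
      induction i with
      | zero => exact h0
      | succ j ih =>
        rcases key j with ⟨h1,_⟩|⟨_,h2⟩|⟨_,h2⟩
        · exact absurd h1 ih
        · rw [h2]; exact fun hh => had hh.symm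
        · rw [h2]; exact fun hh => hac hh.symm
    refine per2 u 0 c d fun i _ => ?_
    rcases key i with ⟨h1,_⟩|hh|hh
    · exact absurd h1 (hna i)
    · exact Or.inl hh
    · exact Or.inr hh

lemma contra_disj (u : ℕ → A) (a b c d : A)
    (hac : a ≠ c) (had : a ≠ d) (hbc : b ≠ c) (hbd : b ≠ d)
    (key : ∀ i, (u i = a ∧ u (i+1) = b) ∨ (u i = b ∧ u (i+1) = a) ∨
      (u i = c ∧ u (i+1) = d) ∨ (u i = d ∧ u (i+1) = c)) :
    EventuallyPeriodic u := by
  by_cases h0 : u 0 = a ∨ u 0 = b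
  · have hab : ∀ i, u i = a ∨ u i = b := by
      intro i
      induction i with
      | zero => exact h0
      | succ j ih =>
        rcases key j with ⟨_,h2⟩|⟨_,h2⟩|⟨h1,_⟩|⟨h1,_⟩
        · exact Or.inr h2
        · exact Or.inl h2
        · rcases ih with ih|ih
          · exact absurd (ih.symm.trans h1) hac
          · exact absurd (ih.symm.trans h1) hbc
        · rcases ih with ih|ih
          · exact absurd (ih.symm.trans h1) had
          · exact absurd (ih.symm.trans h1) hbd
    refine per2 u 0 a b fun i _ => ?_
    rcases key i with hh|hh|⟨h1,_⟩|⟨h1,_⟩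
    · exact Or.inl hh
    · exact Or.inr hh
    · rcases hab i with ih|ih
      · exact absurd (ih.symm.trans h1) hac
      · exact absurd (ih.symm.trans h1) hbc
    · rcases hab i with ih|ih
      · exact absurd (ih.symm.trans h1) had
      · exact absurd (ih.symm.trans h1) hbd
  · have hcd : ∀ i, ¬(u i = a ∨ u i = b) := by
      intro i
      induction i with
      | zero => exact h0
      | succ j ih =>
        rcases key j with ⟨h1,_⟩|⟨h1,_⟩|⟨_,h2⟩|⟨_,h2⟩
        · exact absurd (Or.inl h1) ih
        · exact absurd (Or.inr h1) ih
        · rw [h2]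
          rintro (hh|hh)
          · exact had hh.symm
          · exact hbd hh.symm
        · rw [h2]
          rintro (hh|hh)
          · exact hac hh.symm
          · exact hbc hh.symm
    refine per2 u 0 c d fun i _ => ?_
    rcases key i with ⟨h1,_⟩|⟨h1,_⟩|hh|hh
    · exact absurd (Or.inl h1) (hcd i)
    · exact absurd (Or.inr h1) (hcd i)
    · exact Or.inl hh
    · exact Or.inr hh

end Aux19

set_option maxHeartbeats 2000000 in
/-- an aperiodic `u` with `r_u(2) = 2` has
`L_2(u) = {aa, ab, ba}` for distinct `a, b`, or `L_2(u) = {ac, bc, ca, cb}`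
for pairwise distinct `a, b, c`. -/
theorem stmt19 {A : Type*} [Fintype A] (u : ℕ → A) (hu : ¬ EventuallyPeriodic u)
    (hr : reflComplexity u 2 = 2) :
    (∃ a b : A, a ≠ b ∧ LangN u 2 = {[a, a], [a, b], [b, a]}) ∨
    (∃ a b c : A, a ≠ b ∧ c ≠ a ∧ c ≠ b ∧
      LangN u 2 = {[a, c], [b, c], [c, a], [c, b]}) := by
  classical
  have h2 : (Quotient.mk (reflSetoid A) '' LangN u 2).ncard = 2 := hr
  obtain ⟨q1, q2, hq12, hQ⟩ := Set.ncard_eq_two.mp h2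
  have hq1 : q1 ∈ Quotient.mk (reflSetoid A) '' LangN u 2 := by rw [hQ]; simp
  have hq2 : q2 ∈ Quotient.mk (reflSetoid A) '' LangN u 2 := by rw [hQ]; simp
  obtain ⟨w1, hw1, hw1q⟩ := hq1
  obtain ⟨w2, hw2, hw2q⟩ := hq2
  obtain ⟨a1, b1, rfl⟩ := List.length_eq_two.mp hw1.1
  obtain ⟨a2, b2, rfl⟩ := List.length_eq_two.mp hw2.1
  have hD : ∀ w ∈ LangN u 2, w = [a1,b1] ∨ w = [b1,a1] ∨ w = [a2,b2] ∨ w = [b2,a2] := by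
    intro w hw
    have hm : Quotient.mk (reflSetoid A) w ∈ ({q1, q2} : Set _) := by
      rw [← hQ]; exact ⟨w, hw, rfl⟩
    simp only [Set.mem_insert_iff, Set.mem_singleton_iff] at hm
    rcases hm with h|h
    · rcases (Quotient.exact (h.trans hw1q.symm) : ReflEquiv w [a1,b1]) with h'|h'
      · exact Or.inl h'
      · right; left; simpa using h'
    · rcases (Quotient.exact (h.trans hw2q.symm) : ReflEquiv w [a2,b2]) with h'|h'
      · right; right; exact Or.inl h'
      · right; right; right; simpa using h'
  have hne : ¬ ReflEquiv ([a1,b1]) ([a2,b2]) := by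
    intro h
    exact hq12 (hw1q.symm.trans ((Quotient.sound h).trans hw2q))
  have hP : ¬(a1 = a2 ∧ b1 = b2) := by
    rintro ⟨rfl, rfl⟩; exact hne (Or.inl rfl)
  have hQ' : ¬(a1 = b2 ∧ b1 = a2) := by
    rintro ⟨rfl, rfl⟩; exact hne (Or.inr (by simp))
  have key : ∀ i, (u i = a1 ∧ u (i+1) = b1) ∨ (u i = b1 ∧ u (i+1) = a1) ∨
      (u i = a2 ∧ u (i+1) = b2) ∨ (u i = b2 ∧ u (i+1) = a2) := by
    intro i
    simpa using hD _ (factor2_mem u i)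
  by_cases ha : a1 = b1
  · subst ha
    by_cases hb : a2 = b2
    · subst hb
      exact absurd (contra_pal2 u a1 a2 (fun i => by have := key i; tauto)) hu
    · by_cases hc : a1 = a2
      · subst hc
        have hd : a1 ≠ b2 := fun h => hP ⟨rfl, h⟩
        exact Or.inl ⟨a1, b2, hd, palcase u hu a1 b2
          (fun w hw => by have := hD w hw; tauto)⟩
      · by_cases hd : a1 = b2
        · subst hd
          exact Or.inl ⟨a1, a2, hc, palcase u hu a1 a2
            (fun w hw => by have := hD w hw; tauto)⟩
        · exact absurd (contra_paldisj u a1 a2 b2 hc hd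
            (fun i => by have := key i; tauto)) hu
  · by_cases hb : a2 = b2
    · subst hb
      by_cases hc : a2 = a1
      · subst hc
        have hd : a2 ≠ b1 := fun h => hP ⟨rfl, h.symm⟩
        exact Or.inl ⟨a2, b1, hd, palcase u hu a2 b1
          (fun w hw => by have := hD w hw; tauto)⟩
      · by_cases hd : a2 = b1
        · subst hd
          exact Or.inl ⟨a2, a1, hc, palcase u hu a2 a1
            (fun w hw => by have := hD w hw; tauto)⟩
        · exact absurd (contra_paldisj u a2 a1 b1 hc hd
            (fun i => by have := key i; tauto)) hu
    · by_cases h1 : a1 = a2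
      · subst h1
        have hbb : b1 ≠ b2 := fun h => hP ⟨rfl, h⟩
        refine Or.inr ⟨b1, b2, a1, hbb, ha, hb, ?_⟩
        exact shared u hu a1 b1 b2 (Ne.symm ha) (Ne.symm hb) hbb
          (fun w hw => by have := hD w hw; tauto)
      · by_cases h2 : a1 = b2
        · subst h2
          have hby : b1 ≠ a2 := fun h => hQ' ⟨rfl, h⟩
          refine Or.inr ⟨b1, a2, a1, hby, ha, h1, ?_⟩
          exact shared u hu a1 b1 a2 (Ne.symm ha) hb hby
            (fun w hw => by have := hD w hw; tauto)
        · by_cases h3 : b1 = a2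
          · subst h3
            have hxy : a1 ≠ b2 := h2
            refine Or.inr ⟨a1, b2, b1, hxy, Ne.symm ha, hb, ?_⟩
            exact shared u hu b1 a1 b2 ha (Ne.symm hb) hxy
              (fun w hw => by have := hD w hw; tauto)
          · by_cases h4 : b1 = b2
            · subst h4
              refine Or.inr ⟨a1, a2, b1, h1, Ne.symm ha, h3, ?_⟩
              exact shared u hu b1 a1 a2 ha (Ne.symm h3) h1
                (fun w hw => by have := hD w hw; tauto)
            · exact absurd (contra_disj u a1 b1 a2 b2 h1 h2 h3 h4 key) hu

end ReflPaper
end
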